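/- For all integers q,p ≥ 1 and every moment sequence c : ℤ → Matrix(Fin q, Fin p, ℂ), the following identities of semi-infinite matrices hold (all products are entrywise finite sums, since Υ, η, ν have one nonzero entry per row and column): Υ_{[q]}·M_c = M_c·Υ_{[p]}; Υ_{[q]}ᵀ·𝓜_c = 𝓜_c·Υ_{[p]}ᵀ; η_{[q]}·M_c·η_{[p]} = ν_{[q]}·M_c·ν_{[p]}; and η_{[q]}·𝓜_c·η_{[p]} = ν_{[q]}·𝓜_c·ν_{[p]}. -/

import Mathlib

noncomputable section

/-- CMV exponent sequence 0, -1, 1, -2, 2, … : e(2k)=k, e(2k+1)=-(k+1). -/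
def cmvE (n : ℕ) : ℤ := if n % 2 = 0 then ((n / 2 : ℕ) : ℤ) else -(((n / 2 : ℕ) : ℤ) + 1)

/-- The semi-infinite 0–1 matrix Υ_{[r]}. -/
def Ups (r : ℕ) : ℕ → ℕ → ℂ := fun n m =>
  if n % r = m % r ∧ cmvE (m / r) = cmvE (n / r) + 1 then 1 else 0

/-- The intertwining matrix η_{[r]}. -/
def Eta (r : ℕ) : ℕ → ℕ → ℂ := fun n m =>
  if n % r = m % r ∧ cmvE (m / r) = -cmvE (n / r) then 1 else 0

/-- The untangling matrix ν_{[r]}. -/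
def Nu (r : ℕ) : ℕ → ℕ → ℂ := fun n m =>
  if n % r = m % r ∧ cmvE (m / r) = -cmvE (n / r) - 1 then 1 else 0

/-- Entrywise product of semi-infinite matrices (entrywise finite sums in all uses below). -/
def mprod (A B : ℕ → ℕ → ℂ) : ℕ → ℕ → ℂ := fun n m => ∑' k, A n k * B k m

/-- The semi-infinite identity matrix. -/
def mid : ℕ → ℕ → ℂ := fun n m => if n = m then 1 else 0

/-- Transpose of a semi-infinite matrix. -/
def mtrans (A : ℕ → ℕ → ℂ) : ℕ → ℕ → ℂ := fun n m => A m n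

/-- Powers of a semi-infinite matrix. -/
def mpow (A : ℕ → ℕ → ℂ) : ℕ → ℕ → ℕ → ℂ
  | 0 => mid
  | d + 1 => mprod A (mpow A d)

/-- The CMV monomial matrix Z_{[r]}(z). -/
def cmvZ (r : ℕ) (z : ℂ) : ℕ → ℕ → ℂ := fun n a =>
  if n % r = a then z ^ cmvE (n / r) else 0

def LowerTri (L : ℕ → ℕ → ℂ) : Prop := ∀ n m, n < m → L n m = 0

def UpperTri (U : ℕ → ℕ → ℂ) : Prop := ∀ n m, m < n → U n m = 0

/-- The left CMV moment matrix M_c. -/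
def cmvM {q p : ℕ} (hq : 0 < q) (hp : 0 < p)
    (c : ℤ → Matrix (Fin q) (Fin p) ℂ) : ℕ → ℕ → ℂ := fun n m =>
  c (cmvE (n / q) - cmvE (m / p)) ⟨n % q, Nat.mod_lt _ hq⟩ ⟨m % p, Nat.mod_lt _ hp⟩

/-- The right CMV moment matrix 𝓜_c. -/
def cmvMR {q p : ℕ} (hq : 0 < q) (hp : 0 < p)
    (c : ℤ → Matrix (Fin q) (Fin p) ℂ) : ℕ → ℕ → ℂ := fun n m =>
  c (cmvE (m / p) - cmvE (n / q)) ⟨n % q, Nat.mod_lt _ hq⟩ ⟨m % p, Nat.mod_lt _ hp⟩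


/-- Inverse of the CMV exponent sequence. -/
def einv (j : ℤ) : ℕ := if 0 ≤ j then 2 * j.toNat else 2 * (-j).toNat - 1

lemma cmvE_einv (j : ℤ) : cmvE (einv j) = j := by
  unfold cmvE einv; split_ifs <;> omega

lemma einv_cmvE (n : ℕ) : einv (cmvE n) = n := by
  unfold cmvE einv; split_ifs <;> omega

lemma key (r : ℕ) (hr : 0 < r) (n k : ℕ) (t : ℤ) :
    (n % r = k % r ∧ cmvE (k / r) = t) ↔ k = r * einv t + n % r := by
  constructor
  · rintro ⟨h1, h2⟩
    have h3 : einv t = k / r := by rw [← h2, einv_cmvE]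
    have h4 := Nat.div_add_mod k r
    rw [← h3] at h4
    omega
  · intro h
    subst h
    have hm : n % r < r := Nat.mod_lt _ hr
    have h2 : (r * einv t + n % r) % r = n % r := by
      rw [Nat.mul_add_mod, Nat.mod_eq_of_lt hm]
    have h3 : (r * einv t + n % r) / r = einv t := by
      rw [Nat.mul_add_div hr, Nat.div_eq_of_lt hm, add_zero]
    exact ⟨h2.symm, by rw [h3, cmvE_einv]⟩

lemma ite_key (r : ℕ) (hr : 0 < r) {P : Prop} [Decidable P] (n k : ℕ) (t : ℤ)
    (hP : P ↔ (n % r = k % r ∧ cmvE (k / r) = t)) :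
    (if P then (1:ℂ) else 0) = if k = r * einv t + n % r then 1 else 0 := by
  have h := hP.trans (key r hr n k t)
  simp only [h]

lemma tsum_indicator_mul (a : ℕ) (f g : ℕ → ℂ)
    (hf : ∀ k, f k = if k = a then 1 else 0) :
    ∑' k, f k * g k = g a := by
  have h : ∀ k, f k * g k = if k = a then g a else 0 := by
    intro k; rw [hf]
    split_ifs with h
    · subst h; ring
    · ring
  simp only [h]
  exact tsum_ite_eq a (fun _ => g a)

lemma tsum_mul_indicator (a : ℕ) (f g : ℕ → ℂ)
    (hg : ∀ k, g k = if k = a then 1 else 0) :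
    ∑' k, f k * g k = f a := by
  have h : ∀ k, f k * g k = if k = a then f a else 0 := by
    intro k; rw [hg]
    split_ifs with h
    · subst h; ring
    · ring
  simp only [h]
  exact tsum_ite_eq a (fun _ => f a)

lemma self_decomp (r : ℕ) (n : ℕ) : n = r * einv (cmvE (n / r)) + n % r := by
  rw [einv_cmvE]; exact (Nat.div_add_mod n r).symm

lemma cmvM_shift {q p : ℕ} (hq : 0 < q) (hp : 0 < p) (c : ℤ → Matrix (Fin q) (Fin p) ℂ)
    (t s : ℤ) {b a : ℕ} (hb : b < q) (ha : a < p) :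
    cmvM hq hp c (q * einv t + b) (p * einv s + a) = c (t - s) ⟨b, hb⟩ ⟨a, ha⟩ := by
  have h1 : (q * einv t + b) / q = einv t := by
    rw [Nat.mul_add_div hq, Nat.div_eq_of_lt hb, add_zero]
  have h2 : (q * einv t + b) % q = b := by
    rw [Nat.mul_add_mod, Nat.mod_eq_of_lt hb]
  have h3 : (p * einv s + a) / p = einv s := by
    rw [Nat.mul_add_div hp, Nat.div_eq_of_lt ha, add_zero]
  have h4 : (p * einv s + a) % p = a := by
    rw [Nat.mul_add_mod, Nat.mod_eq_of_lt ha]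
  unfold cmvM
  have e1 : (⟨(q * einv t + b) % q, Nat.mod_lt _ hq⟩ : Fin q) = ⟨b, hb⟩ := Fin.ext h2
  have e2 : (⟨(p * einv s + a) % p, Nat.mod_lt _ hp⟩ : Fin p) = ⟨a, ha⟩ := Fin.ext h4
  rw [e1, e2, h1, h3, cmvE_einv, cmvE_einv]

lemma cmvMR_shift {q p : ℕ} (hq : 0 < q) (hp : 0 < p) (c : ℤ → Matrix (Fin q) (Fin p) ℂ)
    (t s : ℤ) {b a : ℕ} (hb : b < q) (ha : a < p) :
    cmvMR hq hp c (q * einv t + b) (p * einv s + a) = c (s - t) ⟨b, hb⟩ ⟨a, ha⟩ := by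
  have h1 : (q * einv t + b) / q = einv t := by
    rw [Nat.mul_add_div hq, Nat.div_eq_of_lt hb, add_zero]
  have h2 : (q * einv t + b) % q = b := by
    rw [Nat.mul_add_mod, Nat.mod_eq_of_lt hb]
  have h3 : (p * einv s + a) / p = einv s := by
    rw [Nat.mul_add_div hp, Nat.div_eq_of_lt ha, add_zero]
  have h4 : (p * einv s + a) % p = a := by
    rw [Nat.mul_add_mod, Nat.mod_eq_of_lt ha]
  unfold cmvMR
  have e1 : (⟨(q * einv t + b) % q, Nat.mod_lt _ hq⟩ : Fin q) = ⟨b, hb⟩ := Fin.ext h2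
  have e2 : (⟨(p * einv s + a) % p, Nat.mod_lt _ hp⟩ : Fin p) = ⟨a, ha⟩ := Fin.ext h4
  rw [e1, e2, h1, h3, cmvE_einv, cmvE_einv]

lemma Ups_row (r : ℕ) (hr : 0 < r) (n k : ℕ) :
    Ups r n k = if k = r * einv (cmvE (n / r) + 1) + n % r then 1 else 0 :=
  ite_key r hr n k _ Iff.rfl

lemma Ups_col (r : ℕ) (hr : 0 < r) (k m : ℕ) :
    Ups r k m = if k = r * einv (cmvE (m / r) - 1) + m % r then 1 else 0 :=
  ite_key r hr m k _ ⟨fun ⟨h1, h2⟩ => ⟨h1.symm, by omega⟩, fun ⟨h1, h2⟩ => ⟨h1.symm, by omega⟩⟩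

lemma UpsT_row (r : ℕ) (hr : 0 < r) (n k : ℕ) :
    mtrans (Ups r) n k = if k = r * einv (cmvE (n / r) - 1) + n % r then 1 else 0 :=
  ite_key r hr n k _ ⟨fun ⟨h1, h2⟩ => ⟨h1.symm, by omega⟩, fun ⟨h1, h2⟩ => ⟨h1.symm, by omega⟩⟩

lemma UpsT_col (r : ℕ) (hr : 0 < r) (k m : ℕ) :
    mtrans (Ups r) k m = if k = r * einv (cmvE (m / r) + 1) + m % r then 1 else 0 :=
  ite_key r hr m k _ Iff.rfl

lemma Eta_row (r : ℕ) (hr : 0 < r) (n k : ℕ) :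
    Eta r n k = if k = r * einv (-cmvE (n / r)) + n % r then 1 else 0 :=
  ite_key r hr n k _ Iff.rfl

lemma Eta_col (r : ℕ) (hr : 0 < r) (k m : ℕ) :
    Eta r k m = if k = r * einv (-cmvE (m / r)) + m % r then 1 else 0 :=
  ite_key r hr m k _ ⟨fun ⟨h1, h2⟩ => ⟨h1.symm, by omega⟩, fun ⟨h1, h2⟩ => ⟨h1.symm, by omega⟩⟩

lemma Nu_row (r : ℕ) (hr : 0 < r) (n k : ℕ) :
    Nu r n k = if k = r * einv (-cmvE (n / r) - 1) + n % r then 1 else 0 :=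
  ite_key r hr n k _ Iff.rfl

lemma Nu_col (r : ℕ) (hr : 0 < r) (k m : ℕ) :
    Nu r k m = if k = r * einv (-cmvE (m / r) - 1) + m % r then 1 else 0 :=
  ite_key r hr m k _ ⟨fun ⟨h1, h2⟩ => ⟨h1.symm, by omega⟩, fun ⟨h1, h2⟩ => ⟨h1.symm, by omega⟩⟩

/-- action of the spectral matrices Υ, η, ν on the CMV moment matrices. -/
theorem stmt_4 (q p : ℕ) (hq : 0 < q) (hp : 0 < p) (c : ℤ → Matrix (Fin q) (Fin p) ℂ) :
    mprod (Ups q) (cmvM hq hp c) = mprod (cmvM hq hp c) (Ups p) ∧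
    mprod (mtrans (Ups q)) (cmvMR hq hp c) = mprod (cmvMR hq hp c) (mtrans (Ups p)) ∧
    mprod (mprod (Eta q) (cmvM hq hp c)) (Eta p)
      = mprod (mprod (Nu q) (cmvM hq hp c)) (Nu p) ∧
    mprod (mprod (Eta q) (cmvMR hq hp c)) (Eta p)
      = mprod (mprod (Nu q) (cmvMR hq hp c)) (Nu p) := by
  have hb : ∀ n : ℕ, n % q < q := fun n => Nat.mod_lt _ hq
  have ha : ∀ m : ℕ, m % p < p := fun m => Nat.mod_lt _ hp
  refine ⟨?_, ?_, ?_, ?_⟩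
  · funext n m
    show (∑' k, Ups q n k * cmvM hq hp c k m) = ∑' k, cmvM hq hp c n k * Ups p k m
    rw [tsum_indicator_mul _ _ _ (fun k => Ups_row q hq n k),
      tsum_mul_indicator _ _ _ (fun k => Ups_col p hp k m)]
    conv_lhs => rw [self_decomp p m]
    conv_rhs => rw [self_decomp q n]
    rw [cmvM_shift hq hp c _ _ (hb n) (ha m), cmvM_shift hq hp c _ _ (hb n) (ha m)]
    have : cmvE (n / q) + 1 - cmvE (m / p) = cmvE (n / q) - (cmvE (m / p) - 1) := by ring
    rw [this]
  · funext n m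
    show (∑' k, mtrans (Ups q) n k * cmvMR hq hp c k m)
        = ∑' k, cmvMR hq hp c n k * mtrans (Ups p) k m
    rw [tsum_indicator_mul _ _ _ (fun k => UpsT_row q hq n k),
      tsum_mul_indicator _ _ _ (fun k => UpsT_col p hp k m)]
    conv_lhs => rw [self_decomp p m]
    conv_rhs => rw [self_decomp q n]
    rw [cmvMR_shift hq hp c _ _ (hb n) (ha m), cmvMR_shift hq hp c _ _ (hb n) (ha m)]
    have : cmvE (m / p) - (cmvE (n / q) - 1) = cmvE (m / p) + 1 - cmvE (n / q) := by ring
    rw [this]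
  · funext n m
    have h1 : ∀ k, mprod (Eta q) (cmvM hq hp c) n k
        = cmvM hq hp c (q * einv (-cmvE (n / q)) + n % q) k := fun k =>
      tsum_indicator_mul _ _ _ (fun j => Eta_row q hq n j)
    have h2 : ∀ k, mprod (Nu q) (cmvM hq hp c) n k
        = cmvM hq hp c (q * einv (-cmvE (n / q) - 1) + n % q) k := fun k =>
      tsum_indicator_mul _ _ _ (fun j => Nu_row q hq n j)
    show (∑' k, mprod (Eta q) (cmvM hq hp c) n k * Eta p k m)
        = ∑' k, mprod (Nu q) (cmvM hq hp c) n k * Nu p k m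
    simp only [h1, h2]
    rw [tsum_mul_indicator _ _ _ (fun k => Eta_col p hp k m),
      tsum_mul_indicator _ _ _ (fun k => Nu_col p hp k m)]
    rw [cmvM_shift hq hp c _ _ (hb n) (ha m), cmvM_shift hq hp c _ _ (hb n) (ha m)]
    have : -cmvE (n / q) - -cmvE (m / p)
        = -cmvE (n / q) - 1 - (-cmvE (m / p) - 1) := by ring
    rw [this]
  · funext n m
    have h1 : ∀ k, mprod (Eta q) (cmvMR hq hp c) n k
        = cmvMR hq hp c (q * einv (-cmvE (n / q)) + n % q) k := fun k =>
      tsum_indicator_mul _ _ _ (fun j => Eta_row q hq n j)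
    have h2 : ∀ k, mprod (Nu q) (cmvMR hq hp c) n k
        = cmvMR hq hp c (q * einv (-cmvE (n / q) - 1) + n % q) k := fun k =>
      tsum_indicator_mul _ _ _ (fun j => Nu_row q hq n j)
    show (∑' k, mprod (Eta q) (cmvMR hq hp c) n k * Eta p k m)
        = ∑' k, mprod (Nu q) (cmvMR hq hp c) n k * Nu p k m
    simp only [h1, h2]
    rw [tsum_mul_indicator _ _ _ (fun k => Eta_col p hp k m),
      tsum_mul_indicator _ _ _ (fun k => Nu_col p hp k m)]
    rw [cmvMR_shift hq hp c _ _ (hb n) (ha m), cmvMR_shift hq hp c _ _ (hb n) (ha m)]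
    have : -cmvE (m / p) - -cmvE (n / q)
        = -cmvE (m / p) - 1 - (-cmvE (n / q) - 1) := by ring
    rw [this]
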